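/- Let G be a graph on k ≥ 1 vertices and G' a graph on k' ≥ 1 vertices, and let G ∨ G' denote their join (on k + k' vertices). If P(G, n)/C(n, k) → a, P(G', n)/C(n, k') → b, and P(G ∨ G', n)/C(n, k+k') → c as n → ∞, then c ≥ ((k+k')! · k^k · k'^{k'} / (k! · k'! · (k+k')^{k+k'})) · a · b. -/

import Mathlib

open Classical in
/-- Number of `k`-element vertex subsets of `G` whose induced subgraph is isomorphic to `H`,
where `k` is the number of vertices of `H`. -/
noncomputable def inducedCount {α β : Type*} [Fintype α] [Fintype β]
    (H : SimpleGraph α) (G : SimpleGraph β) : ℕ :=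
  (Finset.univ.filter fun S : Finset β =>
    S.card = Fintype.card α ∧ Nonempty ((G.induce (S : Set β)) ≃g H)).card

/-- The maximum of `inducedCount H G` over all graphs `G` on `n` vertices. -/
noncomputable def maxInducedCount {α : Type*} [Fintype α] (H : SimpleGraph α) (n : ℕ) : ℕ :=
  sSup {m | ∃ G : SimpleGraph (Fin n), inducedCount H G = m}

/-- The join (disjunction) `G ∨ G'` of two graphs: disjoint copies of `G` and `G'` together
with all possible edges between the vertices of `G` and the vertices of `G'`. -/
def joinGraph {α β : Type*} (G : SimpleGraph α) (G' : SimpleGraph β) :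
    SimpleGraph (α ⊕ β) :=
  (G ⊕g G') ⊔ completeBipartiteGraph α β

section Aux

open Finset SimpleGraph

/-- Transport an induced subgraph along a host-graph isomorphism. -/
noncomputable def induceIsoOfIso {γ δ : Type*} {F : SimpleGraph γ} {F' : SimpleGraph δ}
    (φ : F ≃g F') (s : Set γ) : F.induce s ≃g F'.induce ((φ : γ → δ) '' s) where
  toEquiv := Equiv.Set.image φ s φ.toEquiv.injective
  map_rel_iff' := by
    rintro ⟨a, ha⟩ ⟨b, hb⟩
    simp [Equiv.Set.image, Equiv.Set.imageOfInjOn, φ.map_rel_iff]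

open Classical in
theorem inducedCount_iso {α γ δ : Type*} [Fintype α] [Fintype γ] [Fintype δ]
    (H : SimpleGraph α) {F : SimpleGraph γ} {F' : SimpleGraph δ} (φ : F ≃g F') :
    inducedCount H F = inducedCount H F' := by
  classical
  unfold inducedCount
  apply Finset.card_bij (fun S _ => S.image φ)
  · intro S hS
    simp only [Finset.mem_filter, Finset.mem_univ, true_and] at hS ⊢
    obtain ⟨hcard, ⟨ψ⟩⟩ := hS
    refine ⟨by rw [Finset.card_image_of_injective _ φ.injective, hcard], ?_⟩
    rw [Finset.coe_image]
    exact ⟨ψ.comp (induceIsoOfIso φ (S : Set γ)).symm⟩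
  · intro S hS T hT h
    exact Finset.image_injective φ.injective h
  · intro T hT
    refine ⟨T.image φ.symm, ?_, ?_⟩
    · simp only [Finset.mem_filter, Finset.mem_univ, true_and] at hT ⊢
      obtain ⟨hcard, ⟨ψ⟩⟩ := hT
      refine ⟨by rw [Finset.card_image_of_injective _ φ.symm.injective, hcard], ?_⟩
      rw [Finset.coe_image]
      exact ⟨ψ.comp (induceIsoOfIso φ.symm (T : Set δ)).symm⟩
    · ext x
      simp only [Finset.mem_image]
      constructor
      · rintro ⟨y, ⟨z, hz, rfl⟩, rfl⟩; simpa using hz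
      · intro hx; exact ⟨φ.symm x, ⟨x, hx, rfl⟩, by simp⟩

/-- The join respects isomorphism. -/
def joinIsoCongr {α β α' β' : Type*} {A : SimpleGraph α} {B : SimpleGraph β}
    {A' : SimpleGraph α'} {B' : SimpleGraph β'} (e1 : A ≃g A') (e2 : B ≃g B') :
    joinGraph A B ≃g joinGraph A' B' where
  toEquiv := Equiv.sumCongr e1.toEquiv e2.toEquiv
  map_rel_iff' := by
    rintro (x | x) (y | y) <;>
      simp [joinGraph, SimpleGraph.sum, e1.map_rel_iff, e2.map_rel_iff]

def sumSubsetEquiv {γ δ : Type*} (S1 : Finset γ) (S2 : Finset δ) :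
    ((S1.disjSum S2 : Finset (γ ⊕ δ)) : Set (γ ⊕ δ)) ≃ ((S1 : Set γ) ⊕ (S2 : Set δ)) where
  toFun := fun x => match x with
    | ⟨Sum.inl a, h⟩ => Sum.inl ⟨a, by simpa using h⟩
    | ⟨Sum.inr b, h⟩ => Sum.inr ⟨b, by simpa using h⟩
  invFun := fun x => match x with
    | Sum.inl ⟨a, ha⟩ => ⟨Sum.inl a, by simpa using ha⟩
    | Sum.inr ⟨b, hb⟩ => ⟨Sum.inr b, by simpa using hb⟩
  left_inv := by rintro ⟨(a | b), h⟩ <;> rfl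
  right_inv := by rintro (⟨a, ha⟩ | ⟨b, hb⟩) <;> rfl

/-- The induced subgraph of a join on a disjoint sum of sets is the join of the two
induced subgraphs. -/
def induceJoin {γ δ : Type*} (F1 : SimpleGraph γ) (F2 : SimpleGraph δ)
    (S1 : Finset γ) (S2 : Finset δ) :
    (joinGraph F1 F2).induce ((S1.disjSum S2 : Finset (γ ⊕ δ)) : Set (γ ⊕ δ)) ≃g
      joinGraph (F1.induce (S1 : Set γ)) (F2.induce (S2 : Set δ)) where
  toEquiv := sumSubsetEquiv S1 S2
  map_rel_iff' := by rintro ⟨(x | x), hx⟩ ⟨(y | y), hy⟩ <;> exact Iff.rfl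

open Classical in
theorem inducedCount_mul_le {α β γ δ : Type*} [Fintype α] [Fintype β] [Fintype γ] [Fintype δ]
    (G : SimpleGraph α) (G' : SimpleGraph β) (F1 : SimpleGraph γ) (F2 : SimpleGraph δ) :
    inducedCount G F1 * inducedCount G' F2 ≤ inducedCount (joinGraph G G') (joinGraph F1 F2) := by
  classical
  unfold inducedCount
  rw [← Finset.card_product]
  apply Finset.card_le_card_of_injOn (fun p => p.1.disjSum p.2)
  · rintro ⟨S1, S2⟩ hp
    simp only [Finset.mem_coe, Finset.mem_product, Finset.mem_filter, Finset.mem_univ, true_and] at hp ⊢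
    obtain ⟨⟨h1, ⟨ψ1⟩⟩, h2, ⟨ψ2⟩⟩ := hp
    refine ⟨by rw [Finset.card_disjSum, h1, h2, Fintype.card_sum], ?_⟩
    exact ⟨(joinIsoCongr ψ1 ψ2).comp (induceJoin F1 F2 S1 S2)⟩
  · rintro ⟨S1, S2⟩ _ ⟨T1, T2⟩ _ h
    obtain ⟨h1, h2⟩ := Finset.disjSum_inj.mp h
    exact Prod.ext h1 h2

theorem bddAbove_counts {α : Type*} [Fintype α] (H : SimpleGraph α) (n : ℕ) :
    BddAbove {m | ∃ G : SimpleGraph (Fin n), inducedCount H G = m} :=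
  (Set.finite_range (inducedCount H)).bddAbove

theorem exists_max_graph {α : Type*} [Fintype α] (H : SimpleGraph α) (n : ℕ) :
    ∃ F : SimpleGraph (Fin n), inducedCount H F = maxInducedCount H n :=
  Nat.sSup_mem (s := {m | ∃ G : SimpleGraph (Fin n), inducedCount H G = m})
    ⟨_, ⟨⊥, rfl⟩⟩ (bddAbove_counts H n)

theorem le_maxInducedCount {α : Type*} [Fintype α] (H : SimpleGraph α) {n : ℕ}
    (F : SimpleGraph (Fin n)) : inducedCount H F ≤ maxInducedCount H n :=
  le_csSup (bddAbove_counts H n) ⟨F, rfl⟩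

theorem maxInducedCount_mul_le {α β : Type*} [Fintype α] [Fintype β]
    (G : SimpleGraph α) (G' : SimpleGraph β) (p q : ℕ) :
    maxInducedCount G p * maxInducedCount G' q ≤ maxInducedCount (joinGraph G G') (p + q) := by
  obtain ⟨F1, hF1⟩ := exists_max_graph G p
  obtain ⟨F2, hF2⟩ := exists_max_graph G' q
  calc maxInducedCount G p * maxInducedCount G' q
      = inducedCount G F1 * inducedCount G' F2 := by rw [hF1, hF2]
    _ ≤ inducedCount (joinGraph G G') (joinGraph F1 F2) := inducedCount_mul_le G G' F1 F2
    _ ≤ maxInducedCount (joinGraph G G') (p + q) := by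
        rw [inducedCount_iso (joinGraph G G')
          (SimpleGraph.Iso.map finSumFinEquiv (joinGraph F1 F2))]
        exact le_maxInducedCount _ _

theorem choose_asymp (j : ℕ) :
    Filter.Tendsto (fun m : ℕ => ((j * m).choose j : ℝ) / (m : ℝ) ^ j)
      Filter.atTop (nhds ((j : ℝ) ^ j / (j.factorial : ℝ))) := by
  have hprod : Filter.Tendsto
      (fun m : ℕ => (∏ i ∈ Finset.range j, ((j : ℝ) - (i : ℝ) / (m : ℝ))) / (j.factorial : ℝ))
      Filter.atTop (nhds ((j : ℝ) ^ j / (j.factorial : ℝ))) := by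
    have h : Filter.Tendsto (fun m : ℕ => ∏ i ∈ Finset.range j, ((j : ℝ) - (i : ℝ) / (m : ℝ)))
        Filter.atTop (nhds (∏ _i ∈ Finset.range j, (j : ℝ))) := by
      refine tendsto_finset_prod _ fun i _ => ?_
      simpa using tendsto_const_nhds.sub (tendsto_const_div_atTop_nhds_zero_nat (i : ℝ))
    rw [Finset.prod_const, Finset.card_range] at h
    exact h.div_const _
  refine hprod.congr' ?_
  filter_upwards [Filter.eventually_ge_atTop 1] with m hm
  have hm0 : (m : ℝ) ≠ 0 := Nat.cast_ne_zero.mpr (by omega)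
  have hstep : ∀ i ∈ Finset.range j,
      (j : ℝ) - (i : ℝ) / (m : ℝ) = ((j * m - i : ℕ) : ℝ) / (m : ℝ) := by
    intro i hi
    rw [Finset.mem_range] at hi
    have hle : i ≤ j * m := le_trans hi.le (Nat.le_mul_of_pos_right j (by omega))
    rw [Nat.cast_sub hle]
    push_cast
    field_simp
  rw [Finset.prod_congr rfl hstep, Finset.prod_div_distrib, Finset.prod_const, Finset.card_range,
    ← Nat.cast_prod, ← Nat.descFactorial_eq_prod_range, Nat.descFactorial_eq_factorial_mul_choose]
  have hfac : (j.factorial : ℝ) ≠ 0 := Nat.cast_ne_zero.mpr j.factorial_ne_zero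
  push_cast
  field_simp

end Aux

/-- Pippenger–Golumbic, Theorem 6, disjunction case. For graphs `G` on
`k ≥ 1` vertices and `G'` on `k' ≥ 1` vertices, if the normalized maximum induced counts of
`G`, `G'` and their join `G ∨ G'` converge to `a`, `b`, `c` respectively, then
`c ≥ ((k+k')! k^k k'^{k'} / (k! k'! (k+k')^{k+k'})) · a · b`. -/
theorem inducibility_join {α β : Type*} [Fintype α] [Fintype β]
    (G : SimpleGraph α) (G' : SimpleGraph β)
    (hk : 1 ≤ Fintype.card α) (hk' : 1 ≤ Fintype.card β) (a b c : ℝ)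
    (ha : Filter.Tendsto
      (fun n : ℕ => (maxInducedCount G n : ℝ) / (n.choose (Fintype.card α) : ℝ))
      Filter.atTop (nhds a))
    (hb : Filter.Tendsto
      (fun n : ℕ => (maxInducedCount G' n : ℝ) / (n.choose (Fintype.card β) : ℝ))
      Filter.atTop (nhds b))
    (hc : Filter.Tendsto
      (fun n : ℕ => (maxInducedCount (joinGraph G G') n : ℝ) /
        (n.choose (Fintype.card α + Fintype.card β) : ℝ))
      Filter.atTop (nhds c)) :
    ((Fintype.card α + Fintype.card β).factorial : ℝ) *
        (Fintype.card α : ℝ) ^ (Fintype.card α) * (Fintype.card β : ℝ) ^ (Fintype.card β) /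
        (((Fintype.card α).factorial : ℝ) * ((Fintype.card β).factorial : ℝ) *
          ((Fintype.card α + Fintype.card β : ℕ) : ℝ) ^
            (Fintype.card α + Fintype.card β)) * a * b ≤ c := by
  classical
  set k := Fintype.card α with hk_def
  set k' := Fintype.card β with hk'_def
  set K := k + k' with hK_def
  have htk : Filter.Tendsto (fun m : ℕ => k * m) Filter.atTop Filter.atTop :=
    Filter.tendsto_atTop_mono (fun m => Nat.le_mul_of_pos_left m (by omega)) Filter.tendsto_id
  have htk' : Filter.Tendsto (fun m : ℕ => k' * m) Filter.atTop Filter.atTop :=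
    Filter.tendsto_atTop_mono (fun m => Nat.le_mul_of_pos_left m (by omega)) Filter.tendsto_id
  have htK : Filter.Tendsto (fun m : ℕ => K * m) Filter.atTop Filter.atTop :=
    Filter.tendsto_atTop_mono (fun m => Nat.le_mul_of_pos_left m (by omega)) Filter.tendsto_id
  have hA := ha.comp htk
  have hB := hb.comp htk'
  have hC := hc.comp htK
  have hL0 : ((K : ℝ) ^ K / (K.factorial : ℝ)) ≠ 0 := by
    have : 0 < K := by omega
    positivity
  have hRlim : Filter.Tendsto
      (fun m : ℕ => (((k * m).choose k : ℝ) * ((k' * m).choose k' : ℝ)) / ((K * m).choose K : ℝ))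
      Filter.atTop (nhds (((k : ℝ) ^ k / (k.factorial : ℝ)) * ((k' : ℝ) ^ k' / (k'.factorial : ℝ))
        / ((K : ℝ) ^ K / (K.factorial : ℝ)))) := by
    have h := ((choose_asymp k).mul (choose_asymp k')).div (choose_asymp K) hL0
    refine h.congr' ?_
    filter_upwards [Filter.eventually_ge_atTop 1] with m hm
    have hm0 : (m : ℝ) ≠ 0 := Nat.cast_ne_zero.mpr (by omega)
    have hZ : ((K * m).choose K : ℝ) ≠ 0 :=
      Nat.cast_ne_zero.mpr (Nat.choose_pos (Nat.le_mul_of_pos_right K (by omega))).ne'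
    have hmK : (m : ℝ) ^ K = (m : ℝ) ^ k * (m : ℝ) ^ k' := by rw [hK_def, pow_add]
    simp only [Pi.div_apply]
    field_simp
    rw [hmK]
    ring
  have hDlim := (hA.mul hB).mul hRlim
  have hineq : (fun m : ℕ =>
      ((maxInducedCount G (k * m) : ℝ) / ((k * m).choose k : ℝ)) *
        ((maxInducedCount G' (k' * m) : ℝ) / ((k' * m).choose k' : ℝ)) *
        ((((k * m).choose k : ℝ) * ((k' * m).choose k' : ℝ)) / ((K * m).choose K : ℝ)))
      ≤ᶠ[Filter.atTop]
      (fun m : ℕ => (maxInducedCount (joinGraph G G') (K * m) : ℝ) / ((K * m).choose K : ℝ)) := by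
    filter_upwards [Filter.eventually_ge_atTop 1] with m hm
    have hX : ((k * m).choose k : ℝ) ≠ 0 :=
      Nat.cast_ne_zero.mpr (Nat.choose_pos (Nat.le_mul_of_pos_right k (by omega))).ne'
    have hY : ((k' * m).choose k' : ℝ) ≠ 0 :=
      Nat.cast_ne_zero.mpr (Nat.choose_pos (Nat.le_mul_of_pos_right k' (by omega))).ne'
    have hZpos : (0 : ℝ) < ((K * m).choose K : ℝ) :=
      Nat.cast_pos.mpr (Nat.choose_pos (Nat.le_mul_of_pos_right K (by omega)))
    have key : maxInducedCount G (k * m) * maxInducedCount G' (k' * m) ≤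
        maxInducedCount (joinGraph G G') (K * m) := by
      have h := maxInducedCount_mul_le G G' (k * m) (k' * m)
      rwa [← Nat.add_mul] at h
    have heq : ((maxInducedCount G (k * m) : ℝ) / ((k * m).choose k : ℝ)) *
        ((maxInducedCount G' (k' * m) : ℝ) / ((k' * m).choose k' : ℝ)) *
        ((((k * m).choose k : ℝ) * ((k' * m).choose k' : ℝ)) / ((K * m).choose K : ℝ)) =
        ((maxInducedCount G (k * m) : ℝ) * (maxInducedCount G' (k' * m) : ℝ)) /
          ((K * m).choose K : ℝ) := by
      field_simp
    rw [heq]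
    gcongr
    exact_mod_cast key
  have hfinal := le_of_tendsto_of_tendsto hDlim hC hineq
  have hconst : ((K.factorial : ℝ) * (k : ℝ) ^ k * (k' : ℝ) ^ k' /
      ((k.factorial : ℝ) * (k'.factorial : ℝ) * ((K : ℕ) : ℝ) ^ K)) * a * b =
      a * b * (((k : ℝ) ^ k / (k.factorial : ℝ)) * ((k' : ℝ) ^ k' / (k'.factorial : ℝ))
        / ((K : ℝ) ^ K / (K.factorial : ℝ))) := by
    have h1 : (k.factorial : ℝ) ≠ 0 := Nat.cast_ne_zero.mpr k.factorial_ne_zero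
    have h2 : (k'.factorial : ℝ) ≠ 0 := Nat.cast_ne_zero.mpr k'.factorial_ne_zero
    have h3 : (K.factorial : ℝ) ≠ 0 := Nat.cast_ne_zero.mpr K.factorial_ne_zero
    have h4 : ((K : ℝ)) ≠ 0 := Nat.cast_ne_zero.mpr (by omega)
    field_simp
  rw [hconst]
  exact hfinal
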